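/- Let X and Y be Polish spaces, let Q1 and Q2 be probability measures on X and Y respectively, and let P be a probability measure on X × Y absolutely continuous with respect to the product measure Q = Q1 ⊗ Q2. Then the relative entropy satisfies H(P | Q) ≥ H(P1 | Q1) + H(P2 | Q2), where P1 and P2 are the marginals of P on X and Y. -/

import Mathlib

open MeasureTheory Real ENNReal

/-- Gibbs' inequality: relative entropy is nonnegative. -/
lemma my_integral_llr_nonneg {α : Type*} [MeasurableSpace α] {μ ν : Measure α}
    [IsProbabilityMeasure μ] [IsProbabilityMeasure ν]
    (hμν : μ ≪ ν) (h_int : Integrable (llr μ ν) μ) :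
    0 ≤ ∫ x, llr μ ν x ∂μ := by
  have h_exp_int : Integrable (fun x => exp (- llr μ ν x)) μ :=
    (Measure.integrable_toReal_rnDeriv (μ := ν) (ν := μ)).congr (exp_neg_llr hμν).symm
  have h_exp_eq : ∫ x, exp (- llr μ ν x) ∂μ = ∫ x, (ν.rnDeriv μ x).toReal ∂μ :=
    integral_congr_ae (exp_neg_llr hμν)
  have h_le_one : ∫ x, (ν.rnDeriv μ x).toReal ∂μ ≤ 1 := by
    rw [Measure.integral_toReal_rnDeriv']
    simp only [measureReal_def, measure_univ, ENNReal.toReal_one]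
    have := ENNReal.toReal_nonneg (a := ν.singularPart μ Set.univ)
    linarith
  have hJ := convexOn_exp.map_average_le continuous_exp.continuousOn isClosed_univ
      (Filter.Eventually.of_forall fun x => Set.mem_univ _) h_int.neg
      (by simpa [Function.comp_def] using h_exp_int)
  rw [average_eq_integral, average_eq_integral] at hJ
  simp only [Pi.neg_apply, integral_neg] at hJ
  have h1 : exp (- ∫ x, llr μ ν x ∂μ) ≤ 1 := by
    calc exp (- ∫ x, llr μ ν x ∂μ) ≤ ∫ x, exp (- llr μ ν x) ∂μ := hJ
    _ ≤ 1 := by rw [h_exp_eq]; exact h_le_one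
  have := exp_le_one_iff.mp h1
  linarith

section Prod

variable {X Y : Type*} [MeasurableSpace X] [MeasurableSpace Y]

lemma my_map_fst_withDensity (Q1 : Measure X) (Q2 : Measure Y) [SigmaFinite Q1] [SigmaFinite Q2]
    {f : X × Y → ℝ≥0∞} (hf : Measurable f) :
    ((Q1.prod Q2).withDensity f).map Prod.fst
      = Q1.withDensity (fun x => ∫⁻ y, f (x, y) ∂Q2) := by
  ext s hs
  rw [Measure.map_apply measurable_fst hs, withDensity_apply _ (measurable_fst hs),
    withDensity_apply _ hs]
  have h : (Prod.fst : X × Y → X) ⁻¹' s = s ×ˢ (Set.univ : Set Y) := by ext p; simp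
  rw [h, ← Measure.prod_restrict s Set.univ, Measure.restrict_univ,
    lintegral_prod _ hf.aemeasurable]

lemma my_map_snd_withDensity (Q1 : Measure X) (Q2 : Measure Y) [SigmaFinite Q1] [SigmaFinite Q2]
    {f : X × Y → ℝ≥0∞} (hf : Measurable f) :
    ((Q1.prod Q2).withDensity f).map Prod.snd
      = Q2.withDensity (fun y => ∫⁻ x, f (x, y) ∂Q1) := by
  ext t ht
  rw [Measure.map_apply measurable_snd ht, withDensity_apply _ (measurable_snd ht),
    withDensity_apply _ ht]
  have h : (Prod.snd : X × Y → Y) ⁻¹' t = (Set.univ : Set X) ×ˢ t := by ext p; simp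
  rw [h, ← Measure.prod_restrict Set.univ t, Measure.restrict_univ,
    lintegral_prod_symm _ hf.aemeasurable]

lemma my_withDensity_prod (Q1 : Measure X) (Q2 : Measure Y) [SigmaFinite Q1] [SigmaFinite Q2]
    {f1 : X → ℝ≥0∞} {f2 : Y → ℝ≥0∞} (h1 : Measurable f1) (h2 : Measurable f2)
    [SigmaFinite (Q1.withDensity f1)] [SigmaFinite (Q2.withDensity f2)] :
    (Q1.prod Q2).withDensity (fun p => f1 p.1 * f2 p.2)
      = (Q1.withDensity f1).prod (Q2.withDensity f2) := by
  refine (Measure.prod_eq (μ := Q1.withDensity f1) (ν := Q2.withDensity f2)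
    fun s t hs ht => ?_).symm
  rw [withDensity_apply _ (hs.prod ht), withDensity_apply _ hs, withDensity_apply _ ht,
    ← Measure.prod_restrict s t,
    lintegral_prod_mul h1.aemeasurable h2.aemeasurable]

end Prod

/-- Relative entropy (Kullback-Leibler divergence) `H(μ | ν) = ∫ log (dμ/dν) dμ`. -/
noncomputable def relEntropy {α : Type*} [MeasurableSpace α] (μ ν : Measure α) : ℝ :=
  ∫ x, llr μ ν x ∂μ

/-- Chain rule inequality for the relative entropy with respect to a product reference
measure: for `P ≪ Q1 ⊗ Q2` on a product of Polish spaces,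
`H(P | Q1 ⊗ Q2) ≥ H(P1 | Q1) + H(P2 | Q2)` where `P1, P2` are the marginals of `P`. -/
theorem relEntropy_prod_ge_add_marginals
    {X Y : Type*} [MeasurableSpace X] [TopologicalSpace X] [PolishSpace X] [BorelSpace X]
    [MeasurableSpace Y] [TopologicalSpace Y] [PolishSpace Y] [BorelSpace Y]
    (Q1 : Measure X) (Q2 : Measure Y) [IsProbabilityMeasure Q1] [IsProbabilityMeasure Q2]
    (P : Measure (X × Y)) [IsProbabilityMeasure P]
    (hac : P ≪ Q1.prod Q2)
    (hint : Integrable (llr P (Q1.prod Q2)) P)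
    (hint1 : Integrable (llr (P.map Prod.fst) Q1) (P.map Prod.fst))
    (hint2 : Integrable (llr (P.map Prod.snd) Q2) (P.map Prod.snd)) :
    relEntropy P (Q1.prod Q2) ≥
      relEntropy (P.map Prod.fst) Q1 + relEntropy (P.map Prod.snd) Q2 := by
  set Q : Measure (X × Y) := Q1.prod Q2 with hQ
  have hfmeas : Measurable (P.rnDeriv Q) := Measure.measurable_rnDeriv P Q
  set f : X × Y → ℝ≥0∞ := P.rnDeriv Q with hfdef
  set f1 : X → ℝ≥0∞ := fun x => ∫⁻ y, f (x, y) ∂Q2 with hf1def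
  set f2 : Y → ℝ≥0∞ := fun y => ∫⁻ x, f (x, y) ∂Q1 with hf2def
  have hf1meas : Measurable f1 := hfmeas.lintegral_prod_right'
  have hf2meas : Measurable f2 := hfmeas.lintegral_prod_left'
  have hgmeas : Measurable (fun p : X × Y => f1 p.1 * f2 p.2) :=
    (hf1meas.comp measurable_fst).mul (hf2meas.comp measurable_snd)
  have hPwd : Q.withDensity f = P := Measure.withDensity_rnDeriv_eq P Q hac
  have hP1 : P.map Prod.fst = Q1.withDensity f1 := by
    rw [← hPwd]; exact my_map_fst_withDensity Q1 Q2 hfmeas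
  have hP2 : P.map Prod.snd = Q2.withDensity f2 := by
    rw [← hPwd]; exact my_map_snd_withDensity Q1 Q2 hfmeas
  have hac1 : P.map Prod.fst ≪ Q1 := hP1 ▸ withDensity_absolutelyContinuous Q1 f1
  have hac2 : P.map Prod.snd ≪ Q2 := hP2 ▸ withDensity_absolutelyContinuous Q2 f2
  haveI : IsProbabilityMeasure (P.map Prod.fst) :=
    Measure.isProbabilityMeasure_map measurable_fst.aemeasurable
  haveI : IsProbabilityMeasure (P.map Prod.snd) :=
    Measure.isProbabilityMeasure_map measurable_snd.aemeasurable
  haveI hsf1 : SigmaFinite (Q1.withDensity f1) := hP1 ▸ inferInstanceAs (SigmaFinite (P.map Prod.fst))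
  haveI hsf2 : SigmaFinite (Q2.withDensity f2) := hP2 ▸ inferInstanceAs (SigmaFinite (P.map Prod.snd))
  set PP : Measure (X × Y) := (P.map Prod.fst).prod (P.map Prod.snd) with hPPdef
  haveI : IsProbabilityMeasure PP := by rw [hPPdef]; infer_instance
  have hprod : Q.withDensity (fun p => f1 p.1 * f2 p.2) = PP := by
    rw [hPPdef, hP1, hP2]; exact my_withDensity_prod Q1 Q2 hf1meas hf2meas
  -- a.e. vanishing lemmas
  have hN1 : ∀ᵐ p ∂Q, f1 p.1 = 0 → f p = 0 := by
    have hTmeas : MeasurableSet {x | f1 x = 0} := hf1meas (measurableSet_singleton 0)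
    have hzero : P (Prod.fst ⁻¹' {x | f1 x = 0}) = 0 := by
      rw [← Measure.map_apply measurable_fst hTmeas, hP1, withDensity_apply _ hTmeas,
        setLIntegral_eq_zero_iff hTmeas hf1meas]
      exact ae_of_all _ fun x hx => hx
    rw [← hPwd, withDensity_apply _ (measurable_fst hTmeas),
      setLIntegral_eq_zero_iff (measurable_fst hTmeas) hfmeas] at hzero
    filter_upwards [hzero] with p hp hp1
    exact hp hp1
  have hN2 : ∀ᵐ p ∂Q, f2 p.2 = 0 → f p = 0 := by
    have hTmeas : MeasurableSet {y | f2 y = 0} := hf2meas (measurableSet_singleton 0)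
    have hzero : P (Prod.snd ⁻¹' {y | f2 y = 0}) = 0 := by
      rw [← Measure.map_apply measurable_snd hTmeas, hP2, withDensity_apply _ hTmeas,
        setLIntegral_eq_zero_iff hTmeas hf2meas]
      exact ae_of_all _ fun y hy => hy
    rw [← hPwd, withDensity_apply _ (measurable_snd hTmeas),
      setLIntegral_eq_zero_iff (measurable_snd hTmeas) hfmeas] at hzero
    filter_upwards [hzero] with p hp hp2
    exact hp hp2
  -- absolute continuity w.r.t. the product of marginals
  have hacPP : P ≪ PP := by
    refine Measure.AbsolutelyContinuous.mk fun s hs h0 => ?_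
    rw [← hprod, withDensity_apply _ hs, setLIntegral_eq_zero_iff hs hgmeas] at h0
    rw [← hPwd, withDensity_apply _ hs, setLIntegral_eq_zero_iff hs hfmeas]
    filter_upwards [h0, hN1, hN2] with p h1 h2 h3 hps
    rcases mul_eq_zero.mp (h1 hps) with h | h
    · exact h2 h
    · exact h3 h
  -- identification of rnDerivs
  have hrnP1 : ∀ᵐ x ∂Q1, (P.map Prod.fst).rnDeriv Q1 x = f1 x := by
    rw [hP1]; exact Measure.rnDeriv_withDensity Q1 hf1meas
  have hrnP2 : ∀ᵐ y ∂Q2, (P.map Prod.snd).rnDeriv Q2 y = f2 y := by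
    rw [hP2]; exact Measure.rnDeriv_withDensity Q2 hf2meas
  have hrnPP : PP.rnDeriv Q =ᵐ[Q] fun p => f1 p.1 * f2 p.2 := by
    rw [← hprod]; exact Measure.rnDeriv_withDensity Q hgmeas
  have hchain : P.rnDeriv PP * PP.rnDeriv Q =ᵐ[Q] P.rnDeriv Q :=
    Measure.rnDeriv_mul_rnDeriv hacPP
  -- a.e. facts over P
  have hG1 : ∀ᵐ p ∂P, (P.map Prod.fst).rnDeriv Q1 p.1 = f1 p.1 ∧ f1 p.1 < ⊤ := by
    have h : ∀ᵐ x ∂(P.map Prod.fst),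
        (P.map Prod.fst).rnDeriv Q1 x = f1 x ∧ f1 x < ⊤ := by
      apply hac1.ae_le
      filter_upwards [hrnP1, Measure.rnDeriv_lt_top (P.map Prod.fst) Q1] with x h1 h2
      exact ⟨h1, h1 ▸ h2⟩
    exact ae_of_ae_map measurable_fst.aemeasurable h
  have hG2 : ∀ᵐ p ∂P, (P.map Prod.snd).rnDeriv Q2 p.2 = f2 p.2 ∧ f2 p.2 < ⊤ := by
    have h : ∀ᵐ y ∂(P.map Prod.snd),
        (P.map Prod.snd).rnDeriv Q2 y = f2 y ∧ f2 y < ⊤ := by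
      apply hac2.ae_le
      filter_upwards [hrnP2, Measure.rnDeriv_lt_top (P.map Prod.snd) Q2] with y h1 h2
      exact ⟨h1, h1 ▸ h2⟩
    exact ae_of_ae_map measurable_snd.aemeasurable h
  -- key pointwise identity
  have hkey : llr P Q =ᵐ[P] fun p =>
      llr P PP p + (llr (P.map Prod.fst) Q1 p.1 + llr (P.map Prod.snd) Q2 p.2) := by
    filter_upwards [hac.ae_le hchain, hac.ae_le hrnPP, Measure.rnDeriv_pos hac,
      hac.ae_le (Measure.rnDeriv_lt_top P Q), Measure.rnDeriv_pos hacPP,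
      hacPP.ae_le (Measure.rnDeriv_lt_top P PP), hG1, hG2]
      with p hA hB hC hD hE hF hG1p hG2p
    obtain ⟨hG1e, hG1t⟩ := hG1p
    obtain ⟨hG2e, hG2t⟩ := hG2p
    have hfp : P.rnDeriv Q p = P.rnDeriv PP p * (f1 p.1 * f2 p.2) := by
      rw [← hA, Pi.mul_apply, hB]
    have ha0 : P.rnDeriv PP p ≠ 0 := hE.ne'
    have hat : P.rnDeriv PP p ≠ ⊤ := hF.ne
    have hb0 : f1 p.1 ≠ 0 := by
      intro h; rw [h, zero_mul, mul_zero] at hfp; exact hC.ne' hfp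
    have hc0 : f2 p.2 ≠ 0 := by
      intro h; rw [h, mul_zero, mul_zero] at hfp; exact hC.ne' hfp
    have hbt : f1 p.1 ≠ ⊤ := hG1t.ne
    have hct : f2 p.2 ≠ ⊤ := hG2t.ne
    have htoReal : (P.rnDeriv Q p).toReal
        = (P.rnDeriv PP p).toReal * ((f1 p.1).toReal * (f2 p.2).toReal) := by
      rw [hfp, ENNReal.toReal_mul, ENNReal.toReal_mul]
    have hbr : (f1 p.1).toReal ≠ 0 := ENNReal.toReal_ne_zero.mpr ⟨hb0, hbt⟩
    have hcr : (f2 p.2).toReal ≠ 0 := ENNReal.toReal_ne_zero.mpr ⟨hc0, hct⟩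
    have har : (P.rnDeriv PP p).toReal ≠ 0 := ENNReal.toReal_ne_zero.mpr ⟨ha0, hat⟩
    show llr P Q p = _
    simp only [llr]
    rw [hG1e, hG2e, htoReal, Real.log_mul har (mul_ne_zero hbr hcr),
      Real.log_mul hbr hcr]
  -- integrability and integral computations
  have h1comp : Integrable (fun p : X × Y => llr (P.map Prod.fst) Q1 p.1) P :=
    (integrable_map_measure (stronglyMeasurable_llr _ _).aestronglyMeasurable
      measurable_fst.aemeasurable).mp hint1
  have h2comp : Integrable (fun p : X × Y => llr (P.map Prod.snd) Q2 p.2) P :=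
    (integrable_map_measure (stronglyMeasurable_llr _ _).aestronglyMeasurable
      measurable_snd.aemeasurable).mp hint2
  have hint12 : Integrable (fun p : X × Y =>
      llr (P.map Prod.fst) Q1 p.1 + llr (P.map Prod.snd) Q2 p.2) P := h1comp.add h2comp
  have hintPP : Integrable (llr P PP) P := by
    refine (hint.sub hint12).congr ?_
    filter_upwards [hkey] with p hp
    simp only [Pi.sub_apply]
    rw [hp]; ring
  have hGibbs : 0 ≤ ∫ p, llr P PP p ∂P := my_integral_llr_nonneg hacPP hintPP
  have hsplit : ∫ p, llr P Q p ∂P = ∫ p, llr P PP p ∂P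
      + ∫ p, (llr (P.map Prod.fst) Q1 p.1 + llr (P.map Prod.snd) Q2 p.2) ∂P := by
    rw [integral_congr_ae hkey, integral_add hintPP hint12]
  have hmarg1 : ∫ p, llr (P.map Prod.fst) Q1 p.1 ∂P
      = ∫ x, llr (P.map Prod.fst) Q1 x ∂(P.map Prod.fst) :=
    (integral_map measurable_fst.aemeasurable
      (stronglyMeasurable_llr _ _).aestronglyMeasurable).symm
  have hmarg2 : ∫ p, llr (P.map Prod.snd) Q2 p.2 ∂P
      = ∫ y, llr (P.map Prod.snd) Q2 y ∂(P.map Prod.snd) :=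
    (integral_map measurable_snd.aemeasurable
      (stronglyMeasurable_llr _ _).aestronglyMeasurable).symm
  have hadd : ∫ p, (llr (P.map Prod.fst) Q1 p.1 + llr (P.map Prod.snd) Q2 p.2) ∂P
      = ∫ x, llr (P.map Prod.fst) Q1 x ∂(P.map Prod.fst)
      + ∫ y, llr (P.map Prod.snd) Q2 y ∂(P.map Prod.snd) := by
    rw [integral_add h1comp h2comp, hmarg1, hmarg2]
  show relEntropy (P.map Prod.fst) Q1 + relEntropy (P.map Prod.snd) Q2 ≤ relEntropy P Q
  unfold relEntropy
  rw [hsplit, hadd]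
  linarith
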